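/- If (λ_j) is a sequence in 𝒫 and λ ∈ 𝒫 are such that φ_{λ_j} → φ_λ uniformly on every compact subset of G, then λ_j → λ in ℂ. -/

import Mathlib

open Matrix Real Complex MeasureTheory Topology

noncomputable section

/-- The Lorentz form matrix η = diag(−1, 1, …, 1). -/
def lorentzEta (n : ℕ) : Matrix (Fin (n + 1)) (Fin (n + 1)) ℝ :=
  Matrix.diagonal fun i => if i = 0 then (-1 : ℝ) else 1

/-- `SO₀(1,n)`: matrices `g` with `gᵀ η g = η`, `det g = 1` and `g₀₀ ≥ 1`. -/
def SOo (n : ℕ) : Set (Matrix (Fin (n + 1)) (Fin (n + 1)) ℝ) :=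
  {g | gᵀ * lorentzEta n * g = lorentzEta n ∧ g.det = 1 ∧ 1 ≤ g 0 0}

/-- The inverse hyperbolic cosine. -/
def acosh (x : ℝ) : ℝ := Real.log (x + Real.sqrt (x ^ 2 - 1))

/-- The function `φ_λ(g) = exp((λ − ρ)·arccosh(g₀₀))` with `ρ = (n−1)/2`. -/
def phiM (n : ℕ) (l : ℂ) (g : Matrix (Fin (n + 1)) (Fin (n + 1)) ℝ) : ℂ :=
  Complex.exp ((l - ((n : ℂ) - 1) / 2) * (acosh (g 0 0) : ℝ))

/-- The parameter space `𝒫 = {λ ∈ ℂ | (Im λ = 0 ∧ 0 < Re λ ≤ ρ) ∨ Re λ = 0}`. -/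
def Pspace (ρ : ℝ) : Set ℂ :=
  {l | (l.im = 0 ∧ 0 < l.re ∧ l.re ≤ ρ) ∨ l.re = 0}

/-! ### Auxiliary material -/

lemma my_acosh_cosh {t : ℝ} (ht : 0 ≤ t) : acosh (Real.cosh t) = t := by
  unfold acosh
  have h1 : Real.cosh t ^ 2 - 1 = Real.sinh t ^ 2 := by
    have := Real.cosh_sq t; linarith
  rw [h1, Real.sqrt_sq (Real.sinh_nonneg_iff.mpr ht), Real.cosh_add_sinh, Real.log_exp]

/-- Key quantitative estimate: if `e^{δt}` stays `η`-close to 1 on `[0,1]` then `|δ| ≤ 6η`. -/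
lemma my_key {δ : ℂ} {η : ℝ} (hη : 0 ≤ η) (hη2 : η ≤ 1/2)
    (h : ∀ t ∈ Set.Icc (0:ℝ) 1, ‖Complex.exp (δ * t) - 1‖ ≤ η) :
    ‖δ‖ ≤ 6 * η := by
  set x := δ.re with hx
  set y := δ.im with hy
  have h1 : ‖Complex.exp δ - 1‖ ≤ η := by
    simpa using h 1 ⟨zero_le_one, le_refl 1⟩
  have habs : |Real.exp x - 1| ≤ η := by
    have := abs_norm_sub_norm_le (Complex.exp δ) 1
    simp only [Complex.norm_exp, norm_one] at this
    exact this.trans h1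
  have hexp_le : Real.exp x ≤ 1 + η := by have := abs_le.1 habs; linarith
  have hexp_ge : 1 - η ≤ Real.exp x := by have := abs_le.1 habs; linarith
  have hxle : x ≤ η := by
    have : Real.exp x ≤ Real.exp η := hexp_le.trans (by linarith [Real.add_one_le_exp η])
    exact Real.exp_le_exp.mp this
  have hxge : -(2*η) ≤ x := by
    have h2 : Real.exp (-x) ≤ 1 + 2*η := by
      rw [Real.exp_neg]
      rw [inv_le_iff_one_le_mul₀ (Real.exp_pos x)]
      nlinarith [Real.exp_pos x]
    have : Real.exp (-x) ≤ Real.exp (2*η) := h2.trans (by linarith [Real.add_one_le_exp (2*η)])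
    have := Real.exp_le_exp.mp this
    linarith
  -- imaginary part
  have hy2 : |y| ≤ π/2 := by
    by_contra hyc
    push_neg at hyc
    have hy0 : 0 < |y| := lt_trans (by positivity) hyc
    set t₀ := (π/2)/|y| with ht₀def
    have ht₀pos : 0 < t₀ := by positivity
    have ht₀le : t₀ ≤ 1 := by
      rw [div_le_one hy0]; linarith
    have hb := h t₀ ⟨ht₀pos.le, ht₀le⟩
    have hre : (Complex.exp (δ * t₀)).re = 0 := by
      rw [Complex.exp_re]
      have him : (δ * (t₀:ℂ)).im = y * t₀ := by simp [Complex.mul_im, y]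
      have : Real.cos ((δ * (t₀:ℂ)).im) = 0 := by
        rw [him, ← Real.cos_abs, abs_mul, abs_of_pos ht₀pos, ht₀def,
          mul_div_cancel₀ _ (ne_of_gt hy0)]
        exact Real.cos_pi_div_two
      rw [this, mul_zero]
    have hre2 : |(Complex.exp (δ * t₀) - 1).re| ≤ η := (Complex.abs_re_le_norm _).trans hb
    simp [Complex.sub_re, hre] at hre2
    linarith
  have hsin : |Real.sin y| ≤ 2 * η := by
    have him : |(Complex.exp δ - 1).im| ≤ η := (Complex.abs_im_le_norm _).trans h1
    have : (Complex.exp δ - 1).im = Real.exp x * Real.sin y := by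
      simp [Complex.sub_im, Complex.exp_im, x, y]
    rw [this, abs_mul, abs_of_pos (Real.exp_pos x)] at him
    nlinarith [abs_nonneg (Real.sin y)]
  have hyb : |y| ≤ 4 * η := by
    have hj : 2 / π * |y| ≤ Real.sin |y| := Real.mul_le_sin (abs_nonneg y) hy2
    have hs : Real.sin |y| = |Real.sin y| := by
      rcases abs_choice y with h' | h'
      · rw [h']
        refine (_root_.abs_of_nonneg ?_).symm
        apply Real.sin_nonneg_of_nonneg_of_le_pi
        · rw [← h']; exact abs_nonneg y
        · rw [← h']; linarith [hy2, Real.pi_pos]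
      · rw [h', Real.sin_neg]
        have hsy : 0 ≤ Real.sin (-y) := by
          apply Real.sin_nonneg_of_nonneg_of_le_pi
          · rw [← h']; exact abs_nonneg y
          · rw [← h']; linarith [hy2, Real.pi_pos]
        rw [Real.sin_neg] at hsy
        rw [_root_.abs_of_nonpos (by linarith)]
    rw [hs] at hj
    have h2pi : 2 / π * |y| ≤ 2 * η := hj.trans hsin
    have hpi : (0:ℝ) < π := Real.pi_pos
    have : |y| ≤ π * η := by
      rw [div_mul_eq_mul_div, div_le_iff₀ hpi] at h2pi
      nlinarith
    linarith [Real.pi_le_four, abs_nonneg y, mul_le_mul_of_nonneg_right Real.pi_le_four hη]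
  calc ‖δ‖ ≤ |x| + |y| := Complex.norm_le_abs_re_add_abs_im δ
    _ ≤ 2*η + 4*η := by
        have : |x| ≤ 2*η := abs_le.2 ⟨hxge, hxle.trans (by linarith)⟩
        linarith [this, hyb]
    _ = 6 * η := by ring

/-- From uniform closeness of `exp((λ_j-ρ)t)` to `exp((λ₀-ρ)t)` on `[0,1]`, conclude
convergence of the parameters. -/
lemma my_tendsto_of_unif (ρ : ℝ) (hρ1 : ρ ≤ 1) (l : ℕ → ℂ) (l₀ : ℂ) (hre0 : 0 ≤ l₀.re)
    (h : ∀ ε > (0:ℝ), ∀ᶠ j in Filter.atTop, ∀ t ∈ Set.Icc (0:ℝ) 1,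
      ‖Complex.exp ((l j - (ρ:ℂ)) * t) - Complex.exp ((l₀ - (ρ:ℂ)) * t)‖ < ε) :
    Filter.Tendsto l Filter.atTop (nhds l₀) := by
  rw [Metric.tendsto_atTop]
  intro ε hε
  have hη : (0:ℝ) < min (1/6) (ε/37) := by positivity
  obtain ⟨N, hN⟩ := Filter.eventually_atTop.mp (h _ hη)
  refine ⟨N, fun j hj => ?_⟩
  set η := min (1/6) (ε/37) with hηdef
  have hclose : ∀ t ∈ Set.Icc (0:ℝ) 1,
      ‖Complex.exp ((l j - l₀) * t) - 1‖ ≤ 3 * η := by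
    intro t ht
    have hb := hN j hj t ht
    have heq : Complex.exp ((l j - l₀) * t) - 1 =
        (Complex.exp ((l j - (ρ:ℂ)) * t) - Complex.exp ((l₀ - (ρ:ℂ)) * t)) *
          Complex.exp (((ρ:ℂ) - l₀) * t) := by
      have e1 : Complex.exp ((l j - (ρ:ℂ)) * t) * Complex.exp (((ρ:ℂ) - l₀) * t)
          = Complex.exp ((l j - l₀) * t) := by
        rw [← Complex.exp_add]; congr 1; ring
      have e2 : Complex.exp ((l₀ - (ρ:ℂ)) * t) * Complex.exp (((ρ:ℂ) - l₀) * t) = 1 := by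
        rw [← Complex.exp_add, show ((l₀ - (ρ:ℂ)) * t + ((ρ:ℂ) - l₀) * t) = 0 by ring,
          Complex.exp_zero]
      rw [← e1, ← e2]; ring
    rw [heq, norm_mul, Complex.norm_exp]
    have hrebd : ((((ρ:ℂ) - l₀)) * (t:ℂ)).re ≤ 1 := by
      have : ((((ρ:ℂ) - l₀)) * (t:ℂ)).re = (ρ - l₀.re) * t := by
        simp [Complex.mul_re]
      rw [this]
      nlinarith [ht.1, ht.2]
    have hexp3 : Real.exp (((((ρ:ℂ) - l₀)) * (t:ℂ)).re) ≤ 3 := by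
      calc Real.exp _ ≤ Real.exp 1 := Real.exp_le_exp.mpr hrebd
        _ ≤ 3 := by linarith [Real.exp_one_lt_d9]
    calc ‖Complex.exp ((l j - (ρ:ℂ)) * t) - Complex.exp ((l₀ - (ρ:ℂ)) * t)‖ *
          Real.exp (((((ρ:ℂ) - l₀)) * (t:ℂ)).re)
        ≤ η * 3 := by
          apply mul_le_mul hb.le hexp3 (Real.exp_pos _).le hη.le
      _ = 3 * η := by ring
  have h3η : 3 * η ≤ 1/2 := by
    have : η ≤ 1/6 := min_le_left _ _
    linarith
  have habs : ‖l j - l₀‖ ≤ 6 * (3 * η) :=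
    my_key (by positivity) h3η hclose
  have hηε : η ≤ ε / 37 := min_le_right _ _
  rw [Complex.dist_eq]
  calc ‖l j - l₀‖ ≤ 18 * η := by linarith
    _ ≤ 18 * (ε/37) := by linarith
    _ < ε := by linarith

def boost2 (t : ℝ) : Matrix (Fin 3) (Fin 3) ℝ :=
  !![Real.cosh t, Real.sinh t, 0; Real.sinh t, Real.cosh t, 0; 0, 0, 1]

def boost3 (t : ℝ) : Matrix (Fin 4) (Fin 4) ℝ :=
  !![Real.cosh t, Real.sinh t, 0, 0; Real.sinh t, Real.cosh t, 0, 0; 0, 0, 1, 0; 0, 0, 0, 1]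

lemma eta2 : lorentzEta 2 = !![(-1:ℝ),0,0;0,1,0;0,0,1] := by
  ext i j
  fin_cases i <;> fin_cases j <;>
    simp [lorentzEta, Matrix.diagonal, Matrix.vecHead, Matrix.vecTail]

lemma eta3 : lorentzEta 3 = !![(-1:ℝ),0,0,0;0,1,0,0;0,0,1,0;0,0,0,1] := by
  ext i j
  fin_cases i <;> fin_cases j <;>
    simp [lorentzEta, Matrix.diagonal, Matrix.vecHead, Matrix.vecTail]

lemma boost_mem_two (t : ℝ) : boost2 t ∈ SOo 2 := by
  have hc := Real.cosh_sq t
  refine ⟨?_, ?_, ?_⟩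
  · rw [eta2]
    ext i j
    fin_cases i <;> fin_cases j <;>
      simp [boost2, Matrix.mul_apply, Fin.sum_univ_succ, Matrix.transpose,
        Matrix.vecHead, Matrix.vecTail] <;>
      nlinarith [hc]
  · rw [show (boost2 t).det = _ from Matrix.det_fin_three (boost2 t)]
    simp [boost2]
    nlinarith [hc]
  · simp [boost2]

lemma boost_mem_three (t : ℝ) : boost3 t ∈ SOo 3 := by
  have hc := Real.cosh_sq t
  refine ⟨?_, ?_, ?_⟩
  · rw [eta3]
    ext i j
    fin_cases i <;> fin_cases j <;>
      simp [boost3, Matrix.mul_apply, Fin.sum_univ_succ, Matrix.transpose,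
        Matrix.vecHead, Matrix.vecTail] <;>
      nlinarith [hc]
  · simp [boost3, Matrix.det_succ_row_zero, Fin.sum_univ_succ, Matrix.submatrix,
      Matrix.vecHead, Matrix.vecTail, Fin.succAbove, Matrix.det_fin_three]
    nlinarith [hc]
  · simp [boost3]

lemma boost2_continuous : Continuous boost2 := by
  apply continuous_pi; intro i; apply continuous_pi; intro j
  fin_cases i <;> fin_cases j <;> simp [boost2] <;> fun_prop

lemma boost3_continuous : Continuous boost3 := by
  apply continuous_pi; intro i; apply continuous_pi; intro j
  fin_cases i <;> fin_cases j <;> simp [boost3] <;> fun_prop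

/-- If `(λ_j)` is a sequence in `𝒫` and `λ ∈ 𝒫` are such that `φ_{λ_j} → φ_λ` uniformly
on every compact subset of `G`, then `λ_j → λ` in `ℂ`. -/
theorem statement3 (n : ℕ) (hn : n = 2 ∨ n = 3)
    (l : ℕ → ℂ) (hl : ∀ j, l j ∈ Pspace (((n : ℝ) - 1) / 2))
    (l₀ : ℂ) (hl₀ : l₀ ∈ Pspace (((n : ℝ) - 1) / 2))
    (h : ∀ C : Set (SOo n), IsCompact C →
      TendstoUniformlyOn (fun j (g : SOo n) => phiM n (l j) g.val)
        (fun g : SOo n => phiM n l₀ g.val) Filter.atTop C) :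
    Filter.Tendsto l Filter.atTop (nhds l₀) := by
  have hre0 : 0 ≤ l₀.re := by
    rcases hl₀ with ⟨_, h1, _⟩ | h1
    · exact h1.le
    · exact h1.ge
  rcases hn with rfl | rfl
  · -- n = 2
    refine my_tendsto_of_unif (1/2) (by norm_num) l l₀ hre0 ?_
    intro ε hε
    set f : ℝ → SOo 2 := fun t => ⟨boost2 t, boost_mem_two t⟩ with hf
    have hfc : Continuous f := Continuous.subtype_mk boost2_continuous _
    have hC : IsCompact (f '' Set.Icc 0 1) := (isCompact_Icc).image hfc
    have := (Metric.tendstoUniformlyOn_iff.mp (h _ hC)) ε hε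
    filter_upwards [this] with j hj t ht
    have hmem : f t ∈ f '' Set.Icc 0 1 := Set.mem_image_of_mem f ht
    have hd := hj (f t) hmem
    rw [dist_comm, Complex.dist_eq] at hd
    have hb00 : (f t).val 0 0 = Real.cosh t := by simp [hf, boost2]
    have hphi : ∀ w : ℂ, phiM 2 w (f t).val = Complex.exp ((w - ((1:ℝ)/2 : ℝ)) * t) := by
      intro w
      unfold phiM
      rw [hb00, my_acosh_cosh ht.1]
      norm_num
    rw [hphi, hphi] at hd
    convert hd using 4 <;> push_cast <;> norm_num
  · -- n = 3
    refine my_tendsto_of_unif 1 le_rfl l l₀ hre0 ?_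
    intro ε hε
    set f : ℝ → SOo 3 := fun t => ⟨boost3 t, boost_mem_three t⟩ with hf
    have hfc : Continuous f := Continuous.subtype_mk boost3_continuous _
    have hC : IsCompact (f '' Set.Icc 0 1) := (isCompact_Icc).image hfc
    have := (Metric.tendstoUniformlyOn_iff.mp (h _ hC)) ε hε
    filter_upwards [this] with j hj t ht
    have hmem : f t ∈ f '' Set.Icc 0 1 := Set.mem_image_of_mem f ht
    have hd := hj (f t) hmem
    rw [dist_comm, Complex.dist_eq] at hd
    have hb00 : (f t).val 0 0 = Real.cosh t := by simp [hf, boost3]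
    have hphi : ∀ w : ℂ, phiM 3 w (f t).val = Complex.exp ((w - ((1:ℝ) : ℝ)) * t) := by
      intro w
      unfold phiM
      rw [hb00, my_acosh_cosh ht.1]
      norm_num
    rw [hphi, hphi] at hd
    convert hd using 4 <;> push_cast <;> norm_num

end
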